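/- Let G be an extra-special p-group of exponent p² with p an odd prime. Then G admits no AI-automorphism. -/

import Mathlib

open scoped commutatorElement

section Aux

variable {G : Type*} [Group G]

lemma aux_conj_central {z : G} (hz : z ∈ Subgroup.center G) (x : G) :
    z * x * z⁻¹ = x := by
  rw [← Subgroup.mem_center_iff.mp hz x, mul_assoc, mul_inv_cancel, mul_one]

lemma aux_comm_central_left {z : G} (hz : z ∈ Subgroup.center G) (a b : G) :
    ⁅z * a, b⁆ = ⁅a, b⁆ := by
  calc ⁅z * a, b⁆ = z * (a * b * a⁻¹) * z⁻¹ * b⁻¹ := by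
        rw [commutatorElement_def]; group
    _ = (a * b * a⁻¹) * b⁻¹ := by rw [aux_conj_central hz]
    _ = ⁅a, b⁆ := by rw [commutatorElement_def]

lemma aux_comm_central_right {z : G} (hz : z ∈ Subgroup.center G) (a b : G) :
    ⁅a, z * b⁆ = ⁅a, b⁆ := by
  calc ⁅a, z * b⁆ = a * z * (b * a⁻¹ * b⁻¹ * z⁻¹) := by
        rw [commutatorElement_def]; group
    _ = z * a * (b * a⁻¹ * b⁻¹ * z⁻¹) := by rw [Subgroup.mem_center_iff.mp hz a]
    _ = z * ⁅a, b⁆ * z⁻¹ := by rw [commutatorElement_def]; group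
    _ = ⁅a, b⁆ := aux_conj_central hz _

lemma aux_comm_inv_inv {x y : G} (ht : ⁅x, y⁆ ∈ Subgroup.center G) :
    ⁅x⁻¹, y⁻¹⁆ = ⁅x, y⁆ := by
  have key : x * y = ⁅x, y⁆ * (y * x) := by rw [commutatorElement_def]; group
  calc ⁅x⁻¹, y⁻¹⁆ = x⁻¹ * y⁻¹ * (x * y) := by rw [commutatorElement_def]; group
    _ = x⁻¹ * y⁻¹ * (⁅x, y⁆ * (y * x)) := by rw [key]
    _ = (x⁻¹ * y⁻¹) * ⁅x, y⁆ * (y * x) := by group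
    _ = ⁅x, y⁆ * (x⁻¹ * y⁻¹) * (y * x) := by
        rw [Subgroup.mem_center_iff.mp ht (x⁻¹ * y⁻¹)]
    _ = ⁅x, y⁆ := by group

end Aux

/-- An extra-special `p`-group of exponent `p²`, with `p` an odd prime, admits no
AI-automorphism. (Extra-special: a finite `p`-group with `Z(G) = [G,G] = Φ(G)`
cyclic of order `p`; the Frattini condition is expressed by `g^p ∈ [G,G]`.) -/
theorem stmt11 (p : ℕ) (hp : p.Prime) (hodd : Odd p)
    (G : Type*) [Group G] [Finite G] (hpg : IsPGroup p G)
    (h1 : Subgroup.center G = commutator G)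
    (h2 : IsCyclic (Subgroup.center G))
    (h3 : Nat.card (Subgroup.center G) = p)
    (h4 : ∀ g : G, g ^ p ∈ commutator G)
    (hexp : Monoid.exponent G = p ^ 2) :
    ¬ ∃ α : G ≃* G, ∀ g : G, α g * g ∈ commutator G := by
  haveI : Fact p.Prime := ⟨hp⟩
  rintro ⟨α, hα⟩
  -- every value `α g * g` is central
  have hαc : ∀ g : G, α g * g ∈ Subgroup.center G := fun g => h1 ▸ hα g
  have hαeq : ∀ g : G, α g = (α g * g) * g⁻¹ := fun g => by group
  -- central elements have `z ^ p = 1`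
  have hzp : ∀ z : G, z ∈ Subgroup.center G → z ^ p = 1 := by
    intro z hz
    have : (⟨z, hz⟩ : Subgroup.center G) ^ p = 1 := by
      rw [← h3]; exact pow_card_eq_one'
    exact congrArg Subtype.val this
  -- all commutators are central
  have hcc : ∀ x y : G, ⁅x, y⁆ ∈ Subgroup.center G := by
    intro x y
    rw [h1, commutator_def]
    exact Subgroup.commutator_mem_commutator (Subgroup.mem_top x) (Subgroup.mem_top y)
  -- α fixes every commutator
  have hfix : ∀ x y : G, α ⁅x, y⁆ = ⁅x, y⁆ := by
    intro x y
    rw [map_commutatorElement, hαeq x, hαeq y,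
      aux_comm_central_left (hαc x), aux_comm_central_right (hαc y),
      aux_comm_inv_inv (hcc x y)]
  -- find a nontrivial commutator t
  have hne : ∃ x y : G, ⁅x, y⁆ ≠ 1 := by
    by_contra hcon
    push_neg at hcon
    have hbot : commutator G ≤ ⊥ := by
      rw [commutator_eq_closure, Subgroup.closure_le]
      rintro t ⟨x, y, rfl⟩
      simp [hcon x y]
    have : Subgroup.center G = ⊥ := le_bot_iff.mp (h1 ▸ hbot)
    rw [this] at h3
    simp at h3
    exact hp.one_lt.ne' h3.symm
  obtain ⟨x, y, htne⟩ := hne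
  set t : G := ⁅x, y⁆ with ht_def
  have ht_mem : t ∈ Subgroup.center G := hcc x y
  -- α fixes every central element
  have hfixc : ∀ c : G, c ∈ Subgroup.center G → α c = c := by
    intro c hc
    have ht' : (⟨t, ht_mem⟩ : Subgroup.center G) ≠ 1 := by
      intro h; exact htne (congrArg Subtype.val h)
    have := mem_zpowers_of_prime_card h3 ht' (g' := (⟨c, hc⟩ : Subgroup.center G))
    obtain ⟨k, hk⟩ := this
    have hck : t ^ k = c := congrArg Subtype.val hk
    rw [← hck, map_zpow, hfix x y]
  -- find g with g ^ p ≠ 1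
  have hg : ∃ g : G, g ^ p ≠ 1 := by
    by_contra hcon
    push_neg at hcon
    have hd : Monoid.exponent G ∣ p := Monoid.exponent_dvd_of_forall_pow_eq_one hcon
    rw [hexp] at hd
    have := Nat.le_of_dvd hp.pos hd
    nlinarith [hp.two_le]
  obtain ⟨g, hgp⟩ := hg
  set c : G := g ^ p with hc_def
  have hc_mem : c ∈ Subgroup.center G := h1 ▸ h4 g
  -- compute α c = c⁻¹
  have hαg : α g = (α g * g) * g⁻¹ := hαeq g
  have hz := hαc g
  have hcomm : Commute (α g * g) g⁻¹ :=
    (Subgroup.mem_center_iff.mp hz g⁻¹).symm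
  have hαc_eq : α c = c⁻¹ := by
    rw [hc_def, map_pow, hαg, hcomm.mul_pow, hzp _ hz, one_mul, inv_pow, ← inv_pow]
  have : c = c⁻¹ := (hfixc c hc_mem).symm.trans hαc_eq
  -- hence c ^ 2 = 1, but c has order p, odd; contradiction
  have hc2 : c ^ 2 = 1 := by rw [pow_two]; nth_rewrite 1 [this]; exact inv_mul_cancel c
  have hcp : c ^ p = 1 := hzp c hc_mem
  have h2d : orderOf c ∣ 2 := orderOf_dvd_of_pow_eq_one hc2
  have hpd : orderOf c = p := by
    apply orderOf_eq_prime hcp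
    exact hgp
  rw [hpd] at h2d
  have := Nat.le_of_dvd (by norm_num) h2d
  have := hp.two_le
  interval_cases p
  · exact (Nat.not_odd_iff_even.mpr (by norm_num)) hodd
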